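/- Let R be a ring, and let A, C be left R-modules with C pure injective. Let f : A → C be a monomorphism such that f^+ : C^+ → A^+ is a precover of A^+ with respect to the class of pure injective right R-modules. Then f is a pure injective preenvelope of A, i.e., a preenvelope with respect to the class of pure injective left R-modules. -/

import Mathlib

universe u

/-! Common definitions: character modules, purity, pure injectivity. -/

open MulOpposite


/-- The character group `M⁺ = Hom_ℤ(M, ℚ/ℤ)`. -/
def CharMod (M : Type u) [AddCommGroup M] : Type u := M →+ AddCircle (1 : ℚ)

instance (M : Type u) [AddCommGroup M] : AddCommGroup (CharMod M) :=
  inferInstanceAs (AddCommGroup (M →+ AddCircle (1 : ℚ)))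

instance (M : Type u) [AddCommGroup M] : FunLike (CharMod M) M (AddCircle (1 : ℚ)) :=
  inferInstanceAs (FunLike (M →+ AddCircle (1 : ℚ)) M (AddCircle (1 : ℚ)))

instance (M : Type u) [AddCommGroup M] :
    AddMonoidHomClass (CharMod M) M (AddCircle (1 : ℚ)) :=
  inferInstanceAs (AddMonoidHomClass (M →+ AddCircle (1 : ℚ)) M (AddCircle (1 : ℚ)))

/-- If `M` is a left `R`-module, `M⁺` is a right `R`-module via `(c • r) m = c (r • m)`. -/
instance CharMod.moduleOp (R : Type v) [Ring R] (M : Type u) [AddCommGroup M] [Module R M] :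
    Module Rᵐᵒᵖ (CharMod M) where
  smul r c := (c : M →+ AddCircle (1 : ℚ)).comp (DistribMulAction.toAddMonoidHom M r.unop)
  one_smul c := AddMonoidHom.ext fun m => congrArg c (one_smul R m)
  mul_smul r s c := AddMonoidHom.ext fun m => congrArg c (mul_smul s.unop r.unop m)
  smul_zero r := rfl
  smul_add r c d := rfl
  add_smul r s c := AddMonoidHom.ext fun m => by
    show c ((r.unop + s.unop) • m) = c (r.unop • m) + c (s.unop • m)
    rw [add_smul, map_add]
  zero_smul c := AddMonoidHom.ext fun m => by
    show c ((0 : R) • m) = 0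
    rw [zero_smul, map_zero]

@[simp] lemma CharMod.op_smul_apply {R : Type v} [Ring R] {M : Type u} [AddCommGroup M]
    [Module R M] (r : Rᵐᵒᵖ) (c : CharMod M) (m : M) : (r • c) m = c (r.unop • m) := rfl

/-- If `N` is a right `R`-module, `N⁺` is a left `R`-module via `(r • c) n = c (n • r)`. -/
instance CharMod.moduleUnop (R : Type v) [Ring R] (N : Type u) [AddCommGroup N] [Module Rᵐᵒᵖ N] :
    Module R (CharMod N) where
  smul r c := (c : N →+ AddCircle (1 : ℚ)).comp (DistribMulAction.toAddMonoidHom N (op r))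
  one_smul c := AddMonoidHom.ext fun n => congrArg c (one_smul Rᵐᵒᵖ n)
  mul_smul r s c := AddMonoidHom.ext fun n => by
    show c ((op (r * s)) • n) = c (op s • op r • n)
    rw [← mul_smul]; rfl
  smul_zero r := rfl
  smul_add r c d := rfl
  add_smul r s c := AddMonoidHom.ext fun n => by
    show c ((op (r + s)) • n) = c (op r • n) + c (op s • n)
    rw [show op (r + s) = op r + op s from rfl, add_smul, map_add]
  zero_smul c := AddMonoidHom.ext fun n => by
    show c ((op (0 : R)) • n) = 0
    rw [show op (0 : R) = (0 : Rᵐᵒᵖ) from rfl, zero_smul, map_zero]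

@[simp] lemma CharMod.unop_smul_apply {R : Type v} [Ring R] {N : Type u} [AddCommGroup N]
    [Module Rᵐᵒᵖ N] (r : R) (c : CharMod N) (n : N) : (r • c) n = c (op r • n) := rfl

/-- The dual `f⁺ : C⁺ → A⁺` of a map `f : A → C` of left `R`-modules. -/
def charDual {R : Type v} [Ring R] {A C : Type u} [AddCommGroup A] [Module R A]
    [AddCommGroup C] [Module R C] (f : A →ₗ[R] C) : CharMod C →ₗ[Rᵐᵒᵖ] CharMod A where
  toFun c := (c : C →+ AddCircle (1 : ℚ)).comp f.toAddMonoidHom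
  map_add' _ _ := rfl
  map_smul' r c := AddMonoidHom.ext fun a => (congrArg c (f.map_smul r.unop a)).symm

/-- The canonical evaluation map `σ_M : M → M⁺⁺`. -/
def charEval (R : Type v) [Ring R] (M : Type u) [AddCommGroup M] [Module R M] :
    M →ₗ[R] CharMod (CharMod M) where
  toFun m :=
    { toFun := fun c => c m
      map_zero' := rfl
      map_add' := fun _ _ => rfl }
  map_add' m m' := AddMonoidHom.ext fun c => c.map_add m m'
  map_smul' r m := AddMonoidHom.ext fun c => rfl

/-- A linear map `i : M → N` is a pure monomorphism if it is injective and every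
map from a finitely presented module to `N ⧸ im i` lifts to `N`, i.e. the short exact
sequence `0 → M → N → N ⧸ im i → 0` remains exact after applying `Hom(F, -)` for all
finitely presented `F`. -/
def IsPureMono {R : Type v} [Ring R] {M N : Type u} [AddCommGroup M] [Module R M]
    [AddCommGroup N] [Module R N] (i : M →ₗ[R] N) : Prop :=
  Function.Injective i ∧
    ∀ (F : Type u) [AddCommGroup F] [Module R F], Module.FinitePresentation R F →
      ∀ g : F →ₗ[R] (N ⧸ LinearMap.range i),
        ∃ h : F →ₗ[R] N, (LinearMap.range i).mkQ.comp h = g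

/-- A module `E` is pure injective if every map to `E` extends along pure monomorphisms. -/
def IsPureInjective (R : Type v) [Ring R] (E : Type u) [AddCommGroup E] [Module R E] : Prop :=
  ∀ (M N : Type u) [AddCommGroup M] [Module R M] [AddCommGroup N] [Module R N]
    (i : M →ₗ[R] N), IsPureMono i →
      ∀ f : M →ₗ[R] E, ∃ g : N →ₗ[R] E, g.comp i = f
open Finsupp LinearMap

section Solv

variable {R : Type u} [Ring R]

/-- Equational characterization: a finite system of linear equations with constants from `P`
that is solvable in `N` is solvable in `P`, when `i : P → N` is a pure mono. -/
lemma IsPureMono.solv {P N : Type u} [AddCommGroup P] [Module R P]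
    [AddCommGroup N] [Module R N] {i : P →ₗ[R] N} (hi : IsPureMono i)
    {ι κ : Type u} [Fintype ι] [Fintype κ]
    (d : κ → ι → R) (q : κ → P) (y : ι → N) (hy : ∀ j, ∑ l, d j l • y l = i (q j)) :
    ∃ x : ι → P, ∀ j, ∑ l, d j l • x l = q j := by
  classical
  -- the free module and the linear combination map
  let T : (ι → R) →ₗ[R] N :=
    { toFun := fun v => ∑ l, v l • y l
      map_add' := by
        intro v w
        simp [add_smul, Finset.sum_add_distrib]
      map_smul' := by
        intro r v
        simp [mul_smul, Finset.smul_sum] }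
  let k : κ → (ι → R) := fun j => d j
  let Ksub : Submodule R (ι → R) := Submodule.span R (Set.range k)
  have hfp : Module.FinitePresentation R ((ι → R) ⧸ Ksub) := by
    refine Module.finitePresentation_of_surjective Ksub.mkQ (Submodule.mkQ_surjective _) ?_
    rw [Submodule.ker_mkQ]
    exact Submodule.fg_span (Set.finite_range k)
  have hker : Ksub ≤ ker ((LinearMap.range i).mkQ.comp T) := by
    rw [Submodule.span_le]
    rintro _ ⟨j, rfl⟩
    simp only [SetLike.mem_coe, mem_ker, comp_apply]
    have : T (k j) = i (q j) := hy j
    rw [this, Submodule.mkQ_apply, Submodule.Quotient.mk_eq_zero]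
    exact ⟨q j, rfl⟩
  obtain ⟨h, hh⟩ := hi.2 ((ι → R) ⧸ Ksub) hfp (Submodule.liftQ Ksub _ hker)
  set x0 : ι → N := fun l => h (Ksub.mkQ (Pi.single l 1)) with hx0
  have hsingle : ∀ (j : κ), ∑ l, d j l • (Pi.single l (1:R) : ι → R) = k j := by
    intro j
    funext m
    simp only [Finset.sum_apply, Pi.smul_apply, Pi.single_apply, smul_eq_mul,
      mul_ite, mul_one, mul_zero]
    simp [k]
  have hxrel : ∀ j, ∑ l, d j l • x0 l = 0 := by
    intro j
    have : ∑ l, d j l • x0 l = h (Ksub.mkQ (∑ l, d j l • (Pi.single l (1:R) : ι → R))) := by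
      simp [hx0, map_sum, map_smul]
    rw [this, hsingle j]
    have : Ksub.mkQ (k j) = 0 := by
      rw [Submodule.mkQ_apply, Submodule.Quotient.mk_eq_zero]
      exact Submodule.subset_span ⟨j, rfl⟩
    rw [this, map_zero]
  have hx0y : ∀ l, y l - x0 l ∈ LinearMap.range i := by
    intro l
    have h1 : (LinearMap.range i).mkQ (x0 l) = (LinearMap.range i).mkQ (T (Pi.single l 1)) := by
      have := congrArg (fun F => F (Ksub.mkQ (Pi.single l (1:R)))) hh
      simpa [x0] using this
    have h2 : T (Pi.single l (1:R)) = y l := by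
      simp only [T, LinearMap.coe_mk, AddHom.coe_mk]
      rw [Finset.sum_eq_single l]
      · simp
      · intro b _ hb; simp [Pi.single_apply, hb]
      · simp
    have : (LinearMap.range i).mkQ (y l - x0 l) = 0 := by
      rw [map_sub, h1, h2, sub_self]
    rwa [Submodule.mkQ_apply, Submodule.Quotient.mk_eq_zero] at this
  choose p hp using fun l => hx0y l
  refine ⟨p, fun j => hi.1 ?_⟩
  rw [map_sum]
  simp only [map_smul, hp, smul_sub]
  rw [Finset.sum_sub_distrib, hy j, hxrel j, sub_zero]

end Solv
section Helpers

lemma CharMod.sum_apply {M : Type u} [AddCommGroup M] {ι : Type*} (s : Finset ι)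
    (g : ι → CharMod M) (x : M) : (∑ j ∈ s, g j) x = ∑ j ∈ s, g j x :=
  map_sum ({ toFun := fun c => c x, map_zero' := rfl, map_add' := fun _ _ => rfl } :
    CharMod M →+ AddCircle (1:ℚ)) g s

lemma Finset.sum_subtype_ite_smul {α : Type*} {S : Type*} {β : Type*} [Ring S]
    [AddCommGroup β] [Module S β] [DecidableEq α] (s : Finset α) (a : α) (ha : a ∈ s)
    (c : S) (g : ↥s → β) :
    ∑ n : ↥s, (if (n : α) = a then c else 0) • g n = c • g ⟨a, ha⟩ := by
  rw [Finset.sum_eq_single_of_mem (⟨a, ha⟩ : ↥s) (Finset.mem_univ _)]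
  · rw [if_pos rfl]
  · intro b _ hb
    rw [if_neg (fun h => hb (Subtype.ext h)), zero_smul]

end Helpers

section Sep

variable {R : Type u} [Ring R]

/-- Separation: if the dual `f⁺` has a linear section, then any finite system of equations
with constants in `A` solvable in `C` (through `f`) is solvable in `A`. -/
lemma sep_lemma {A C : Type u} [AddCommGroup A] [Module R A] [AddCommGroup C] [Module R C]
    (f : A →ₗ[R] C) (s : CharMod A →ₗ[Rᵐᵒᵖ] CharMod C)
    (hs : ∀ (χ : CharMod A) (a : A), s χ (f a) = χ a)
    {ι κ : Type u} [Fintype ι] [Fintype κ]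
    (r : κ → ι → R) (a : κ → A) (c : ι → C)
    (hc : ∀ j, ∑ l, r j l • c l = f (a j)) :
    ∃ p : ι → A, ∀ j, ∑ l, r j l • p l = a j := by
  classical
  -- the ℤ-linear "system" map
  let T : (ι → A) →+ (κ → A) :=
    AddMonoidHom.mk' (fun x => fun j => ∑ l, r j l • x l) (by
      intro x y
      funext j
      simp [smul_add, Finset.sum_add_distrib])
  by_cases hmem : a ∈ T.range
  · obtain ⟨x, hx⟩ := hmem
    exact ⟨x, fun j => congrFun hx j⟩
  exfalso
  -- separate `a` from the range by a character
  set V := T.range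
  have hne : (QuotientAddGroup.mk' V) a ≠ 0 := by
    simpa [QuotientAddGroup.eq_zero_iff] using hmem
  obtain ⟨c0, hc0⟩ := CharacterModule.exists_character_apply_ne_zero_of_ne_zero hne
  -- the component characters
  let χ : κ → CharMod A := fun j =>
    (c0.comp (QuotientAddGroup.mk' V)).comp (AddMonoidHom.single (fun _ : κ => A) j)
  have hkill : ∀ x : ι → A, c0 (QuotientAddGroup.mk' V (T x)) = 0 := by
    intro x
    have : (QuotientAddGroup.mk' V) (T x) = 0 := by
      simp [QuotientAddGroup.eq_zero_iff]
      exact ⟨x, rfl⟩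
    rw [this, map_zero]
  have heval : ∀ v : κ → A, c0 (QuotientAddGroup.mk' V v) = ∑ j, χ j (v j) := by
    intro v
    conv_lhs => rw [← Finset.univ_sum_single v]
    rw [map_sum, map_sum]
    rfl
  -- the relations satisfied by the χ j
  have hrel : ∀ l, ∑ j, (MulOpposite.op (r j l) • χ j : CharMod A) = 0 := by
    intro l
    refine AddMonoidHom.ext fun a' => ?_
    show (∑ j, (MulOpposite.op (r j l) • χ j : CharMod A)) a' = (0 : CharMod A) a'
    rw [CharMod.sum_apply]
    have : ∀ j, (MulOpposite.op (r j l) • χ j : CharMod A) a' = χ j (r j l • a') := fun j => rfl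
    simp_rw [this]
    have hT : ∀ j, r j l • a' = T (Pi.single l a') j := by
      intro j
      simp only [T, AddMonoidHom.mk'_apply]
      rw [Finset.sum_eq_single l]
      · rw [Pi.single_eq_same]
      · intro b _ hb; rw [Pi.single_eq_of_ne hb, smul_zero]
      · simp
    simp_rw [hT]
    rw [← heval, hkill]
    rfl
  -- transport along the section s
  let ψ : κ → CharMod C := fun j => s (χ j)
  have hψrel : ∀ l, ∑ j, (MulOpposite.op (r j l) • ψ j : CharMod C) = 0 := by
    intro l
    have : ∑ j, (MulOpposite.op (r j l) • ψ j : CharMod C)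
        = s (∑ j, (MulOpposite.op (r j l) • χ j : CharMod A)) := by
      rw [map_sum]
      exact Finset.sum_congr rfl fun j _ => (map_smul s _ _).symm
    rw [this, hrel, map_zero]
  -- contradiction
  apply hc0
  rw [heval]
  have : ∀ j, χ j (a j) = ψ j (f (a j)) := fun j => (hs (χ j) (a j)).symm
  simp_rw [this, ← hc]
  have : ∀ j, ψ j (∑ l, r j l • c l) = ∑ l, ψ j (r j l • c l) := fun j => map_sum _ _ _
  simp_rw [this]
  rw [Finset.sum_comm]
  have : ∀ l j, ψ j (r j l • c l) = (MulOpposite.op (r j l) • ψ j : CharMod C) (c l) :=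
    fun l j => rfl
  simp_rw [this]
  have : ∀ l, ∑ j, (MulOpposite.op (r j l) • ψ j : CharMod C) (c l)
      = (∑ j, (MulOpposite.op (r j l) • ψ j : CharMod C)) (c l) :=
    fun l => (CharMod.sum_apply _ _ _).symm
  simp_rw [this, hψrel]
  exact Finset.sum_eq_zero fun l _ => rfl

end Sep
open TensorProduct

section KeyLemma

variable {R : Type u} [Ring R]
variable {M P N : Type u} [AddCommGroup M] [Module R M]
  [AddCommGroup P] [Module Rᵐᵒᵖ P] [AddCommGroup N] [Module Rᵐᵒᵖ N]

/-- Evaluation of the pairing at a fixed `m`, as an additive hom in the first variable. -/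
@[simps] def evalPair (φ : P →ₗ[Rᵐᵒᵖ] CharMod M) (m : M) : P →+ AddCircle (1:ℚ) where
  toFun p := φ p m
  map_zero' := by show φ 0 m = 0; rw [map_zero]; rfl
  map_add' p q := by show φ (p + q) m = φ p m + φ q m; rw [map_add]; rfl

/-- The pairing `P ⊗[ℤ] M → ℚ/ℤ` induced by `φ : P → M⁺`. -/
noncomputable def pairingβ (φ : P →ₗ[Rᵐᵒᵖ] CharMod M) : P ⊗[ℤ] M →ₗ[ℤ] AddCircle (1:ℚ) :=
  (TensorProduct.liftAddHom
    { toFun := fun p => (φ p : M →+ AddCircle (1:ℚ))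
      map_zero' := map_zero φ
      map_add' := fun p q => map_add φ p q }
    (fun z p m => by
      show φ (z • p) m = φ p (z • m)
      have h1 : φ (z • p) m = z • (φ p m) := by
        have := map_zsmul (evalPair φ m) z p
        simpa [evalPair] using this
      rw [h1, map_zsmul (φ p) z m])).toIntLinearMap

@[simp] lemma pairingβ_tmul (φ : P →ₗ[Rᵐᵒᵖ] CharMod M) (p : P) (m : M) :
    pairingβ φ (p ⊗ₜ m) = φ p m := rfl

/-- The relator term for the balanced tensor product. -/
noncomputable def relTerm (R N M : Type u) [Ring R] [AddCommGroup M] [Module R M]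
    [AddCommGroup N] [Module Rᵐᵒᵖ N] (w : N × R × M) : N ⊗[ℤ] M :=
  (MulOpposite.op w.2.1 • w.1) ⊗ₜ w.2.2 - w.1 ⊗ₜ (w.2.1 • w.2.2)

/-- The submodule of balance relations inside `N ⊗[ℤ] M`. -/
noncomputable def relSub (R N M : Type u) [Ring R] [AddCommGroup M] [Module R M]
    [AddCommGroup N] [Module Rᵐᵒᵖ N] : Submodule ℤ (N ⊗[ℤ] M) :=
  Submodule.span ℤ (Set.range (relTerm R N M))

/-- **Key lemma**: if `i : P → N` is a pure mono of right modules and `φ : P → M⁺`, then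
the pairing induced by `φ` kills every element of `P ⊗[ℤ] M` whose image in `N ⊗[ℤ] M`
is a balance relation. -/
lemma pairingβ_eq_zero_of_mem_relSub (i : P →ₗ[Rᵐᵒᵖ] N) (hi : IsPureMono i)
    (φ : P →ₗ[Rᵐᵒᵖ] CharMod M) (u : P ⊗[ℤ] M)
    (hu : TensorProduct.map i.toAddMonoidHom.toIntLinearMap LinearMap.id u ∈ relSub R N M) :
    pairingβ φ u = 0 := by
  classical
  set i' : P →ₗ[ℤ] N := i.toAddMonoidHom.toIntLinearMap with hi'
  have i'_apply : ∀ p, i' p = i p := fun p => rfl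
  -- represent u as a finite sum of pure tensors
  obtain ⟨sp, hsp⟩ := TensorProduct.exists_finset u
  -- represent the relation witness
  rw [relSub, ← Finsupp.range_linearCombination] at hu
  obtain ⟨ζ, hζ⟩ := hu
  rw [Finsupp.linearCombination_apply, Finsupp.sum] at hζ
  -- the canonical presentation of N over ℤ
  set L : (N →₀ ℤ) →ₗ[ℤ] N := Finsupp.linearCombination ℤ (_root_.id : N → N) with hL
  have hLsingle : ∀ n : N, L (Finsupp.single n 1) = n := by
    intro n; rw [hL, Finsupp.linearCombination_single, one_smul]; rfl
  have hLsurj : Function.Surjective L := fun n => ⟨Finsupp.single n 1, hLsingle n⟩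
  -- the lifted element
  set E : (N →₀ ℤ) ⊗[ℤ] M :=
    (∑ z ∈ sp, Finsupp.single (i z.1) (1:ℤ) ⊗ₜ z.2)
    - ∑ w ∈ ζ.support, ζ w • (Finsupp.single (MulOpposite.op w.2.1 • w.1) (1:ℤ) ⊗ₜ w.2.2
        - Finsupp.single w.1 (1:ℤ) ⊗ₜ (w.2.1 • w.2.2)) with hE
  have hEL : LinearMap.rTensor M L E = 0 := by
    rw [hE, map_sub, map_sum, map_sum]
    simp only [map_smul, map_sub, LinearMap.rTensor_tmul, hLsingle]
    have h1 : ∑ z ∈ sp, (i z.1) ⊗ₜ[ℤ] z.2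
        = TensorProduct.map i' LinearMap.id u := by
      rw [hsp, map_sum]
      exact Finset.sum_congr rfl fun z _ => rfl
    have h2 : ∑ w ∈ ζ.support, ζ w • ((MulOpposite.op w.2.1 • w.1) ⊗ₜ[ℤ] w.2.2
        - w.1 ⊗ₜ[ℤ] (w.2.1 • w.2.2)) = TensorProduct.map i' LinearMap.id u := hζ
    rw [h1, ← h2]
    exact sub_eq_zero_of_eq (Finset.sum_congr rfl fun w _ => by simp [map_zsmul, hLsingle])
  -- exactness: E comes from (ker L) ⊗ M
  have hex : Function.Exact (LinearMap.rTensor M (LinearMap.ker L).subtype)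
      (LinearMap.rTensor M L) :=
    rTensor_exact M (LinearMap.exact_subtype_ker_map L) hLsurj
  obtain ⟨t, ht⟩ := (hex E).mp hEL
  obtain ⟨sk, hsk⟩ := TensorProduct.exists_finset t
  have hE2 : E = ∑ v ∈ sk, ((v.1 : N →₀ ℤ) ⊗ₜ[ℤ] v.2) := by
    rw [← ht, hsk, map_sum]
    exact Finset.sum_congr rfl fun v _ => rfl
  -- the evaluation maps
  set Ev : N → ((N →₀ ℤ) ⊗[ℤ] M →ₗ[ℤ] M) := fun n =>
    (TensorProduct.lid ℤ M).toLinearMap ∘ₗ LinearMap.rTensor M (Finsupp.lapply (R := ℤ) n)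
    with hEv
  have hEv_tmul : ∀ (n : N) (g : N →₀ ℤ) (m : M), Ev n (g ⊗ₜ m) = g n • m := by
    intro n g m
    show TensorProduct.lid ℤ M (LinearMap.rTensor M (Finsupp.lapply (R := ℤ) n) (g ⊗ₜ m)) = g n • m
    rw [LinearMap.rTensor_tmul, TensorProduct.lid_tmul, Finsupp.lapply_apply]
  -- the finite carrier set
  set SS : Finset N := sp.image (fun z => i z.1)
      ∪ ζ.support.image (fun w => MulOpposite.op w.2.1 • w.1)
      ∪ ζ.support.image (fun w => w.1)
      ∪ sk.biUnion (fun v => (v.1 : N →₀ ℤ).support) with hSS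
  have hm1 : ∀ z ∈ sp, i z.1 ∈ SS := by
    intro z hz
    simp only [hSS, Finset.mem_union]
    exact Or.inl (Or.inl (Or.inl (Finset.mem_image_of_mem _ hz)))
  have hm2 : ∀ w ∈ ζ.support, MulOpposite.op w.2.1 • w.1 ∈ SS := by
    intro w hw
    simp only [hSS, Finset.mem_union]
    exact Or.inl (Or.inl (Or.inr (Finset.mem_image_of_mem _ hw)))
  have hm3 : ∀ w ∈ ζ.support, w.1 ∈ SS := by
    intro w hw
    simp only [hSS, Finset.mem_union]
    exact Or.inl (Or.inr (Finset.mem_image_of_mem _ hw))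
  have hm4 : ∀ v ∈ sk, ∀ n ∈ (v.1 : N →₀ ℤ).support, n ∈ SS := by
    intro v hv n hn
    simp only [hSS, Finset.mem_union]
    exact Or.inr (Finset.mem_biUnion.mpr ⟨v, hv, hn⟩)
  -- the linear system
  have hy : ∀ j : (↥sk ⊕ ↥ζ.support ⊕ ↥sp),
      ∑ n : ↥SS, (match j with
        | Sum.inl v => fun n : ↥SS => (((v.1.1 : N →₀ ℤ) (n : N) : ℤ) : Rᵐᵒᵖ)
        | Sum.inr (Sum.inl w) => fun n : ↥SS =>
            (if (n : N) = MulOpposite.op w.1.2.1 • w.1.1 then 1 else 0)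
            + (if (n : N) = w.1.1 then -(MulOpposite.op w.1.2.1) else 0)
        | Sum.inr (Sum.inr z) => fun n : ↥SS =>
            if (n : N) = i z.1.1 then (1 : Rᵐᵒᵖ) else 0) n • ((n : N))
      = i (match j with
        | Sum.inl _ => 0
        | Sum.inr (Sum.inl _) => 0
        | Sum.inr (Sum.inr z) => z.1.1) := by
    rintro (v | w | z)
    · show ∑ n : ↥SS, (((v.1.1 : N →₀ ℤ) (n : N) : ℤ) : Rᵐᵒᵖ) • (n : N) = i 0
      rw [map_zero]
      simp_rw [Int.cast_smul_eq_zsmul]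
      rw [Finset.sum_coe_sort SS (fun n => ((v.1.1 : N →₀ ℤ) n) • n)]
      rw [← Finset.sum_subset (Finset.subset_iff.mpr (hm4 v.1 v.2))
        (fun n _ hn => by rw [Finsupp.notMem_support_iff.mp hn, zero_smul])]
      have : ∑ n ∈ (v.1.1 : N →₀ ℤ).support, ((v.1.1 : N →₀ ℤ) n) • n = L v.1.1 := by
        simp only [hL, Finsupp.linearCombination_apply, Finsupp.sum]
        rfl
      rw [this]
      exact v.1.1.2
    · show ∑ n : ↥SS, ((if (n : N) = MulOpposite.op w.1.2.1 • w.1.1 then 1 else 0)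
        + (if (n : N) = w.1.1 then -(MulOpposite.op w.1.2.1) else 0)) • ((n : N)) = i 0
      rw [map_zero]
      simp_rw [add_smul]
      rw [Finset.sum_add_distrib]
      rw [Finset.sum_subtype_ite_smul SS _ (hm2 w.1 w.2) 1 (fun n => (n : N))]
      rw [Finset.sum_subtype_ite_smul SS _ (hm3 w.1 w.2) (-(MulOpposite.op w.1.2.1))
        (fun n => (n : N))]
      rw [one_smul, neg_smul]
      exact add_neg_cancel _
    · show ∑ n : ↥SS, (if (n : N) = i z.1.1 then (1:Rᵐᵒᵖ) else 0) • ((n : N)) = i z.1.1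
      rw [Finset.sum_subtype_ite_smul SS _ (hm1 z.1 z.2) 1 (fun n => (n : N)), one_smul]
  obtain ⟨x, hx⟩ := hi.solv _ _ (fun n : ↥SS => (n : N)) hy
  -- unpack the three families of equations
  have hxk : ∀ v : ↥sk, ∑ n : ↥SS, ((v.1.1 : N →₀ ℤ) (n : N)) • x n = 0 := by
    intro v
    have h1 : ∑ n : ↥SS, (((v.1.1 : N →₀ ℤ) (n : N) : ℤ) : Rᵐᵒᵖ) • x n = 0 := hx (Sum.inl v)
    simp_rw [Int.cast_smul_eq_zsmul] at h1
    exact h1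
  have hxw : ∀ w : ↥ζ.support,
      x ⟨MulOpposite.op w.1.2.1 • w.1.1, hm2 w.1 w.2⟩
        = MulOpposite.op w.1.2.1 • x ⟨w.1.1, hm3 w.1 w.2⟩ := by
    intro w
    have h1 : ∑ n : ↥SS, ((if (n : N) = MulOpposite.op w.1.2.1 • w.1.1 then 1 else 0)
        + (if (n : N) = w.1.1 then -(MulOpposite.op w.1.2.1) else 0)) • x n = 0 :=
      hx (Sum.inr (Sum.inl w))
    simp_rw [add_smul] at h1
    rw [Finset.sum_add_distrib,
      Finset.sum_subtype_ite_smul SS _ (hm2 w.1 w.2) 1 x,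
      Finset.sum_subtype_ite_smul SS _ (hm3 w.1 w.2) (-(MulOpposite.op w.1.2.1)) x,
      one_smul, neg_smul] at h1
    rwa [add_neg_eq_zero] at h1
  have hxz : ∀ z : ↥sp, x ⟨i z.1.1, hm1 z.1 z.2⟩ = z.1.1 := by
    intro z
    have h1 : ∑ n : ↥SS, (if (n : N) = i z.1.1 then (1:Rᵐᵒᵖ) else 0) • x n = z.1.1 :=
      hx (Sum.inr (Sum.inr z))
    rwa [Finset.sum_subtype_ite_smul SS _ (hm1 z.1 z.2) 1 x, one_smul] at h1
  -- the master sum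
  set Φ : AddCircle (1:ℚ) := ∑ n : ↥SS, φ (x n) (Ev (n : N) E) with hΦ
  -- first evaluation: via the `ker L` representation, Φ = 0
  have hway1 : Φ = 0 := by
    rw [hΦ]
    have hEn : ∀ n : N, Ev n E = ∑ v ∈ sk, ((v.1 : N →₀ ℤ) n) • v.2 := by
      intro n
      rw [hE2, map_sum]
      exact Finset.sum_congr rfl fun v _ => hEv_tmul n _ _
    have step1 : ∀ n : ↥SS, φ (x n) (Ev (n : N) E)
        = ∑ v ∈ sk, ((v.1 : N →₀ ℤ) (n : N)) • (φ (x n) v.2) := by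
      intro n
      rw [hEn, map_sum (φ (x n)) _ sk]
      exact Finset.sum_congr rfl fun v _ => map_zsmul (φ (x n)) _ _
    simp_rw [step1]
    rw [Finset.sum_comm]
    refine Finset.sum_eq_zero fun v hv => ?_
    have step2 : ∀ n : ↥SS, ((v.1 : N →₀ ℤ) (n : N)) • (φ (x n) v.2)
        = evalPair φ v.2 (((v.1 : N →₀ ℤ) (n : N)) • x n) := by
      intro n
      rw [map_zsmul (evalPair φ v.2)]
      rfl
    simp_rw [step2]
    rw [← map_sum (evalPair φ v.2) _ Finset.univ]
    rw [show (∑ n : ↥SS, ((v.1 : N →₀ ℤ) (n : N)) • x n) = 0 from hxk ⟨v, hv⟩]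
    exact map_zero _
  -- second evaluation: via the definition of `E`, Φ = pairingβ φ u
  have hway2 : Φ = pairingβ φ u := by
    rw [hΦ]
    have hEvE : ∀ n : N, Ev n E
        = (∑ z ∈ sp, (if i z.1 = n then (1:ℤ) else 0) • z.2)
          - ∑ w ∈ ζ.support, ζ w •
              ((if MulOpposite.op w.2.1 • w.1 = n then (1:ℤ) else 0) • w.2.2
                - (if w.1 = n then (1:ℤ) else 0) • (w.2.1 • w.2.2)) := by
      intro n
      rw [hE, map_sub, map_sum, map_sum]
      congr 1
      · exact Finset.sum_congr rfl fun z _ => by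
          rw [hEv_tmul, Finsupp.single_apply]
      · refine Finset.sum_congr rfl fun w _ => ?_
        rw [map_smul, map_sub, hEv_tmul, hEv_tmul, Finsupp.single_apply,
          Finsupp.single_apply]
    have step1 : ∀ n : ↥SS, φ (x n) (Ev (n : N) E)
        = (∑ z ∈ sp, (if i z.1 = (n : N) then (1:ℤ) else 0) • (φ (x n) z.2))
          - ∑ w ∈ ζ.support, ζ w •
              ((if MulOpposite.op w.2.1 • w.1 = (n : N) then (1:ℤ) else 0) • (φ (x n) w.2.2)
                - (if w.1 = (n : N) then (1:ℤ) else 0) • (φ (x n) (w.2.1 • w.2.2))) := by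
      intro n
      rw [hEvE]
      rw [map_sub (φ (x n)), map_sum (φ (x n)), map_sum (φ (x n))]
      congr 1
      · exact Finset.sum_congr rfl fun z _ => map_zsmul (φ (x n)) _ _
      · refine Finset.sum_congr rfl fun w _ => ?_
        rw [map_zsmul (φ (x n)), map_sub (φ (x n)), map_zsmul (φ (x n)),
          map_zsmul (φ (x n))]
    simp_rw [step1]
    rw [Finset.sum_sub_distrib]
    -- the second (relator) part vanishes
    have hB : ∑ n : ↥SS, ∑ w ∈ ζ.support, ζ w •
        ((if MulOpposite.op w.2.1 • w.1 = (n : N) then (1:ℤ) else 0) • (φ (x n) w.2.2)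
          - (if w.1 = (n : N) then (1:ℤ) else 0) • (φ (x n) (w.2.1 • w.2.2))) = 0 := by
      rw [Finset.sum_comm]
      rw [← Finset.sum_attach ζ.support]
      refine Finset.sum_eq_zero fun w _ => ?_
      rw [← Finset.smul_sum, Finset.sum_sub_distrib]
      have e1 : ∑ n : ↥SS, (if MulOpposite.op w.1.2.1 • w.1.1 = (n : N) then (1:ℤ) else 0)
          • (φ (x n) w.1.2.2)
          = φ (x ⟨MulOpposite.op w.1.2.1 • w.1.1, hm2 w.1 w.2⟩) w.1.2.2 := by
        have : ∀ n : ↥SS, (if MulOpposite.op w.1.2.1 • w.1.1 = (n : N) then (1:ℤ) else 0)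
            = (if (n : N) = MulOpposite.op w.1.2.1 • w.1.1 then (1:ℤ) else 0) :=
          fun n => if_congr eq_comm rfl rfl
        simp_rw [this]
        rw [Finset.sum_subtype_ite_smul SS _ (hm2 w.1 w.2) (1:ℤ)
          (fun n => φ (x n) w.1.2.2), one_smul]
      have e2 : ∑ n : ↥SS, (if w.1.1 = (n : N) then (1:ℤ) else 0)
          • (φ (x n) (w.1.2.1 • w.1.2.2))
          = φ (x ⟨w.1.1, hm3 w.1 w.2⟩) (w.1.2.1 • w.1.2.2) := by
        have : ∀ n : ↥SS, (if w.1.1 = (n : N) then (1:ℤ) else 0)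
            = (if (n : N) = w.1.1 then (1:ℤ) else 0) :=
          fun n => if_congr eq_comm rfl rfl
        simp_rw [this]
        rw [Finset.sum_subtype_ite_smul SS _ (hm3 w.1 w.2) (1:ℤ)
          (fun n => φ (x n) (w.1.2.1 • w.1.2.2)), one_smul]
      rw [e1, e2, hxw w]
      have : φ (MulOpposite.op w.1.2.1 • x ⟨w.1.1, hm3 w.1 w.2⟩) w.1.2.2
          = φ (x ⟨w.1.1, hm3 w.1 w.2⟩) (w.1.2.1 • w.1.2.2) := by
        rw [map_smul φ]
        rfl
      rw [this, sub_self, smul_zero]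
    rw [hB, sub_zero]
    -- the first part is `pairingβ φ u`
    rw [Finset.sum_comm]
    rw [← Finset.sum_attach sp]
    have e3 : ∀ z : ↥sp, ∑ n : ↥SS, (if i z.1.1 = (n : N) then (1:ℤ) else 0)
        • (φ (x n) z.1.2) = φ z.1.1 z.1.2 := by
      intro z
      have : ∀ n : ↥SS, (if i z.1.1 = (n : N) then (1:ℤ) else 0)
          = (if (n : N) = i z.1.1 then (1:ℤ) else 0) :=
        fun n => if_congr eq_comm rfl rfl
      simp_rw [this]
      rw [Finset.sum_subtype_ite_smul SS _ (hm1 z.1 z.2) (1:ℤ)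
        (fun n => φ (x n) z.1.2), one_smul, hxz z]
    calc ∑ z ∈ sp.attach, ∑ n : ↥SS,
          (if i z.1.1 = (n : N) then (1:ℤ) else 0) • (φ (x n) z.1.2)
        = ∑ z ∈ sp.attach, φ z.1.1 z.1.2 := Finset.sum_congr rfl fun z _ => e3 z
      _ = ∑ z ∈ sp, φ z.1 z.2 := Finset.sum_attach sp (fun z => φ z.1 z.2)
      _ = pairingβ φ u := by
          rw [hsp, map_sum]
          exact (Finset.sum_congr rfl fun z _ => (pairingβ_tmul φ z.1 z.2).symm)
  rw [← hway2, hway1]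

end KeyLemma
section CharModPI

/-- **Character modules are pure injective.** For any left `R`-module `M`, the character
module `M⁺` is a pure injective right `R`-module. -/
lemma charMod_pureInjective (R : Type u) [Ring R] (M : Type u) [AddCommGroup M] [Module R M] :
    IsPureInjective Rᵐᵒᵖ (CharMod M) := by
  intro P N _ _ _ _ i hi φ
  classical
  set i' : P →ₗ[ℤ] N := i.toAddMonoidHom.toIntLinearMap with hi'
  set θ : P ⊗[ℤ] M →ₗ[ℤ] ((N ⊗[ℤ] M) ⧸ relSub R N M) :=
    (relSub R N M).mkQ ∘ₗ TensorProduct.map i' LinearMap.id with hθ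
  have hker : LinearMap.ker θ ≤ LinearMap.ker (pairingβ φ) := by
    intro u hu
    rw [LinearMap.mem_ker] at hu ⊢
    apply pairingβ_eq_zero_of_mem_relSub i hi φ
    exact (Submodule.Quotient.mk_eq_zero _).mp hu
  set βbar : (P ⊗[ℤ] M ⧸ LinearMap.ker θ) →ₗ[ℤ] AddCircle (1:ℚ) :=
    Submodule.liftQ (LinearMap.ker θ) (pairingβ φ) hker with hβbar
  set e := LinearMap.quotKerEquivRange θ with he
  set γ0 : CharacterModule (LinearMap.range θ) :=
    (βbar ∘ₗ (e.symm : LinearMap.range θ →ₗ[ℤ] _)).toAddMonoidHom with hγ0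
  obtain ⟨γ, hγ⟩ := CharacterModule.dual_surjective_of_injective
    (LinearMap.range θ).subtype (Submodule.injective_subtype _) γ0
  have hcomp : ∀ u : P ⊗[ℤ] M,
      γ (Submodule.Quotient.mk (TensorProduct.map i' LinearMap.id u)) = pairingβ φ u := by
    intro u
    have hmem : θ u ∈ LinearMap.range θ := LinearMap.mem_range_self θ u
    have h1 : γ ((LinearMap.range θ).subtype ⟨θ u, hmem⟩) = γ0 ⟨θ u, hmem⟩ := by
      have := congrArg (fun F => F ⟨θ u, hmem⟩) hγ
      exact this
    have h2 : e (Submodule.Quotient.mk u) = ⟨θ u, hmem⟩ := by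
      apply Subtype.ext
      exact LinearMap.quotKerEquivRange_apply_mk θ u
    have h3 : γ0 ⟨θ u, hmem⟩ = pairingβ φ u := by
      rw [hγ0]
      show βbar (e.symm ⟨θ u, hmem⟩) = pairingβ φ u
      rw [← h2, LinearEquiv.symm_apply_apply]
      exact Submodule.liftQ_apply _ _ _
    have h4 : (LinearMap.range θ).subtype ⟨θ u, hmem⟩
        = Submodule.Quotient.mk (TensorProduct.map i' LinearMap.id u) := rfl
    rw [← h4, h1, h3]
  let ψ0 : N → CharMod M := fun n =>
    { toFun := fun m => γ (Submodule.Quotient.mk (n ⊗ₜ[ℤ] m))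
      map_zero' := by
        show γ (Submodule.Quotient.mk (n ⊗ₜ[ℤ] (0:M))) = 0
        rw [TensorProduct.tmul_zero]
        exact map_zero γ
      map_add' := fun m1 m2 => by
        show γ (Submodule.Quotient.mk (n ⊗ₜ[ℤ] (m1 + m2))) = _
        rw [TensorProduct.tmul_add, Submodule.Quotient.mk_add, map_add] }
  refine ⟨{ toFun := ψ0
            map_add' := fun n1 n2 => AddMonoidHom.ext fun m => by
              show γ _ = γ _ + γ _
              rw [TensorProduct.add_tmul, Submodule.Quotient.mk_add, map_add]
            map_smul' := fun r n => AddMonoidHom.ext fun m => ?_ }, ?_⟩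
  · show γ (Submodule.Quotient.mk ((r • n) ⊗ₜ[ℤ] m))
      = γ (Submodule.Quotient.mk (n ⊗ₜ[ℤ] (r.unop • m)))
    congr 1
    rw [Submodule.Quotient.eq]
    refine Submodule.subset_span ?_
    exact ⟨(n, r.unop, m), by rw [relTerm]; rw [MulOpposite.op_unop]⟩
  · refine LinearMap.ext fun p => AddMonoidHom.ext fun m => ?_
    show γ (Submodule.Quotient.mk ((i p) ⊗ₜ[ℤ] m)) = φ p m
    have : (i p) ⊗ₜ[ℤ] m = TensorProduct.map i' LinearMap.id (p ⊗ₜ[ℤ] m) := rfl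
    rw [this, hcomp, pairingβ_tmul]

end CharModPI

/-- **Corollary 3.3 (pure injective version).** If `f : A ↪ C` is a monomorphism of left
`R`-modules with `C` pure injective, and `f⁺ : C⁺ → A⁺` is a precover of `A⁺` with respect
to the class of pure injective right `R`-modules, then `f` is a pure injective preenvelope
of `A`. -/
theorem stmt6 {R : Type u} [Ring R] {A C : Type u}
    [AddCommGroup A] [Module R A] [AddCommGroup C] [Module R C]
    (hC : IsPureInjective R C) (f : A →ₗ[R] C) (hf : Function.Injective f)
    -- `f⁺` is a precover w.r.t. the class of pure injective right `R`-modules: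
    (hdom : IsPureInjective Rᵐᵒᵖ (CharMod C))
    (hfact : ∀ (Y : Type u) [AddCommGroup Y] [Module Rᵐᵒᵖ Y], IsPureInjective Rᵐᵒᵖ Y →
      ∀ g : Y →ₗ[Rᵐᵒᵖ] CharMod A, ∃ h : Y →ₗ[Rᵐᵒᵖ] CharMod C, (charDual f).comp h = g) :
    -- `f` is a pure injective preenvelope of `A`:
    ∀ (X : Type u) [AddCommGroup X] [Module R X], IsPureInjective R X →
      ∀ g : A →ₗ[R] X, ∃ h : C →ₗ[R] X, h.comp f = g := by
  classical
  -- a section of `f⁺`, coming from the precover property applied to the pure injective `A⁺`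
  obtain ⟨s, hs⟩ := hfact (CharMod A) (charMod_pureInjective R A) LinearMap.id
  have hsev : ∀ (χ : CharMod A) (a : A), s χ (f a) = χ a := by
    intro χ a
    have h1 : charDual f (s χ) = χ := by
      have := congrArg (fun F => F χ) hs
      simpa using this
    exact congrArg (fun c : CharMod A => c a) h1
  -- `f` is a pure monomorphism
  have hpure : IsPureMono f := by
    refine ⟨hf, ?_⟩
    intro F _ _ hFP g'
    obtain ⟨sF, hspan, hkerfg⟩ := hFP
    obtain ⟨tF, htF⟩ := hkerfg
    set π : (↥sF →₀ R) →ₗ[R] F := Finsupp.linearCombination R ((↑) : ↥sF → F) with hπ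
    have hπsurj : Function.Surjective π := by
      rw [← LinearMap.range_eq_top, hπ, Finsupp.range_linearCombination,
        Subtype.range_coe_subtype]
      simpa using hspan
    -- choose lifts of the images of the generators
    choose c hc using fun x : ↥sF => Submodule.mkQ_surjective (LinearMap.range f) (g' (x : F))
    set Tc : (↥sF →₀ R) →ₗ[R] C := Finsupp.linearCombination R c with hTc
    have hTcg : (LinearMap.range f).mkQ ∘ₗ Tc = g' ∘ₗ π := by
      refine Finsupp.lhom_ext fun x r => ?_
      rw [LinearMap.comp_apply, LinearMap.comp_apply, hTc, hπ,
        Finsupp.linearCombination_single, Finsupp.linearCombination_single,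
        map_smul, map_smul, hc]
    -- the constants of the system
    have hsys : ∀ κ : ↥tF, ∃ aa : A, f aa = Tc κ.1 := by
      intro κ
      have hκker : (κ : ↥sF →₀ R) ∈ LinearMap.ker π := by
        rw [← htF]
        exact Submodule.subset_span κ.2
      have h0 : (LinearMap.range f).mkQ (Tc κ.1) = 0 := by
        have := congrArg (fun F' => F' (κ : ↥sF →₀ R)) hTcg
        simp only [LinearMap.comp_apply] at this
        rw [this, LinearMap.mem_ker.mp hκker, map_zero]
      have : Tc κ.1 ∈ LinearMap.ker (LinearMap.range f).mkQ := h0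
      rwa [Submodule.ker_mkQ] at this
    choose avec ha using hsys
    -- the system is solvable in `C`, hence in `A` by separation
    have hcsys : ∀ κ : ↥tF, ∑ x : ↥sF, ((κ : ↥sF →₀ R) x) • c x = f (avec κ) := by
      intro κ
      rw [ha κ, hTc, Finsupp.linearCombination_apply,
        Finsupp.sum_fintype _ _ (fun x => zero_smul R (c x))]
    obtain ⟨p, hp⟩ := sep_lemma f s hsev
      (fun (κ : ↥tF) (x : ↥sF) => (κ : ↥sF →₀ R) x) avec c hcsys
    -- the lifted morphism on the free module
    set h0 : (↥sF →₀ R) →ₗ[R] C := Finsupp.linearCombination R (fun x => c x - f (p x))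
      with hh0
    have hkerh0 : LinearMap.ker π ≤ LinearMap.ker h0 := by
      rw [← htF, Submodule.span_le]
      intro κ hκ
      have hκ' : κ ∈ tF := hκ
      show h0 κ = 0
      rw [hh0, Finsupp.linearCombination_apply,
        Finsupp.sum_fintype _ _ (fun x => zero_smul R (c x - f (p x)))]
      have : ∀ x : ↥sF, κ x • (c x - f (p x)) = κ x • c x - κ x • f (p x) :=
        fun x => smul_sub _ _ _
      simp_rw [this]
      rw [Finset.sum_sub_distrib]
      rw [hcsys ⟨κ, hκ'⟩]
      have : ∑ x : ↥sF, κ x • f (p x) = f (∑ x : ↥sF, κ x • p x) := by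
        rw [map_sum]
        exact Finset.sum_congr rfl fun x _ => (map_smul f _ _).symm
      rw [this, hp ⟨κ, hκ'⟩, sub_self]
    set e2 := LinearMap.quotKerEquivOfSurjective π hπsurj with he2def
    refine ⟨(Submodule.liftQ (LinearMap.ker π) h0 hkerh0) ∘ₗ (e2.symm : F →ₗ[R] _), ?_⟩
    refine LinearMap.ext fun y => ?_
    obtain ⟨κ0, rfl⟩ := hπsurj y
    have he2 : e2 (Submodule.Quotient.mk κ0) = π κ0 := rfl
    have hsymm : e2.symm (π κ0) = Submodule.Quotient.mk κ0 := by
      rw [← he2, LinearEquiv.symm_apply_apply]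
    show (LinearMap.range f).mkQ ((Submodule.liftQ (LinearMap.ker π) h0 hkerh0)
      (e2.symm (π κ0))) = g' (π κ0)
    rw [hsymm, Submodule.liftQ_apply]
    have hfinal : (LinearMap.range f).mkQ ∘ₗ h0 = g' ∘ₗ π := by
      refine Finsupp.lhom_ext fun x r => ?_
      rw [LinearMap.comp_apply, LinearMap.comp_apply, hh0, hπ,
        Finsupp.linearCombination_single, Finsupp.linearCombination_single,
        map_smul, map_smul, map_sub, hc]
      have : (LinearMap.range f).mkQ (f (p x)) = 0 := by
        rw [Submodule.mkQ_apply, Submodule.Quotient.mk_eq_zero]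
        exact ⟨p x, rfl⟩
      rw [this, sub_zero]
    have := congrArg (fun F' => F' κ0) hfinal
    simpa only [LinearMap.comp_apply] using this
  intro X _ _ hX g
  exact hX A C f hpure g
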